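/- arXiv:2309.01550 — 2 statements merged into one kernel-verified Lean document; each statement's English description precedes it below -/
import Mathlib

section
/- Let p = (p₁,p₂,p₃) be a vector of nonnegative reals with p₁+p₂+p₃ ≤ 4, and suppose q₂₃ := 1−(p₂+p₃)/2, q₃₁ := 1−(p₃+p₁)/2, and q₁₂ := 1−(p₁+p₂)/2 are all nonnegative. For an integer L ≥ 1 define ε₁ := (1/4)[1 + q₂₃^{1/L} − q₃₁^{1/L} − q₁₂^{1/L}], ε₂ := (1/4)[1 − q₂₃^{1/L} + q₃₁^{1/L} − q₁₂^{1/L}], ε₃ := (1/4)[1 − q₂₃^{1/L} − q₃₁^{1/L} + q₁₂^{1/L}] (real L-th roots). Then the L-fold composition of the linear map T_ε(ρ) := (1−ε₁−ε₂−ε₃)ρ + ε₁σ₁ρσ₁ + ε₂σ₂ρσ₂ + ε₃σ₃ρσ₃ on 2×2 complex matrices equals the Pauli channel E_p, i.e. T_ε∘T_ε∘…∘T_ε (L times) = E_p. -/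
open Matrix Kronecker
open scoped ComplexOrder

noncomputable section

/-- 2×2 complex matrices (one qubit). -/
abbrev Mat2 := Matrix (Fin 2) (Fin 2) ℂ

/-- 4×4 complex matrices indexed by `(Fin 2) × (Fin 2)` (two qubits). -/
abbrev Mat4 := Matrix (Fin 2 × Fin 2) (Fin 2 × Fin 2) ℂ

/-- The identity and the three Pauli matrices: σ₀, σ₁, σ₂, σ₃. -/
def pauli : Fin 4 → Mat2 :=
  ![1, !![0, 1; 1, 0], !![0, -Complex.I; Complex.I, 0], !![1, 0; 0, -1]]

/-- Weights `(p₀, p₁, p₂, p₃)` with `p₀ := 4 - (p₁ + p₂ + p₃)`. -/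
def pw (p : Fin 3 → ℝ) : Fin 4 → ℝ := ![4 - (p 0 + p 1 + p 2), p 0, p 1, p 2]

/-- Single-qubit Pauli channel `E_p(ρ) = Σ_k (p_k/4) σ_k ρ σ_k`. -/
def pauliCh (p : Fin 3 → ℝ) (ρ : Mat2) : Mat2 :=
  ∑ k : Fin 4, ((pw p k / 4 : ℝ) : ℂ) • (pauli k * ρ * pauli k)

/-- `E_p ⊗ id` acting on two-qubit matrices. -/
def pauliFst (p : Fin 3 → ℝ) (ρ : Mat4) : Mat4 :=
  ∑ k : Fin 4, ((pw p k / 4 : ℝ) : ℂ) • ((pauli k ⊗ₖ 1) * ρ * (pauli k ⊗ₖ 1))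

/-- Local Pauli channel `E_p ⊗ E_p'` acting on two-qubit matrices. -/
def pauliLoc (p p' : Fin 3 → ℝ) (ρ : Mat4) : Mat4 :=
  ∑ k : Fin 4, ∑ l : Fin 4,
    ((pw p k * pw p' l / 16 : ℝ) : ℂ) •
      ((pauli k ⊗ₖ pauli l) * ρ * (pauli k ⊗ₖ pauli l))

/-- Partial transpose on the first qubit. -/
def ptranspose (ρ : Mat4) : Mat4 := fun x y => ρ (y.1, x.2) (x.1, y.2)

/-- Smallest (real) eigenvalue of a matrix. -/
def lambdaMin (A : Mat4) : ℝ :=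
  sInf {c : ℝ | ∃ v : Fin 2 × Fin 2 → ℂ, v ≠ 0 ∧ A *ᵥ v = (c : ℂ) • v}

/-- Measure of entanglement `M(ρ) = max (0, −2 λ_min(ρ^{T₁}))`. -/
def entMeasure (ρ : Mat4) : ℝ := max 0 (-2 * lambdaMin (ptranspose ρ))

/-- Two-qubit density matrix. -/
def IsDensity (ρ : Mat4) : Prop := ρ.PosSemidef ∧ ρ.trace = 1

/-- Depolarizing channel `D_q(ρ) = (1−q)·tr(ρ)·I/2 + q·ρ`. -/
def depol (q : ℝ) (ρ : Mat2) : Mat2 :=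
  (((1 - q : ℝ) : ℂ) * ρ.trace / 2) • (1 : Mat2) + ((q : ℝ) : ℂ) • ρ

/-- Basis vector `|ij⟩` of the two-qubit space. -/
def ket2 (i j : Fin 2) : (Fin 2 × Fin 2) → ℂ := fun x => if x = (i, j) then 1 else 0

/-- The four Bell states `|Ψ⁰⟩, |Ψ¹⟩, |Ψ²⟩, |Ψ³⟩`. -/
def bell : Fin 4 → ((Fin 2 × Fin 2) → ℂ) :=
  ![(((Real.sqrt 2 : ℝ) : ℂ))⁻¹ • (ket2 0 0 + ket2 1 1),
    (((Real.sqrt 2 : ℝ) : ℂ))⁻¹ • (ket2 0 1 + ket2 1 0),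
    (((Real.sqrt 2 : ℝ) : ℂ) * Complex.I)⁻¹ • (ket2 0 1 - ket2 1 0),
    (((Real.sqrt 2 : ℝ) : ℂ))⁻¹ • (ket2 0 0 - ket2 1 1)]

/-- Rank-one projector `|ψ⟩⟨ψ|`. -/
def proj (ψ : (Fin 2 × Fin 2) → ℂ) : Mat4 := fun a b => ψ a * (starRingEnd ℂ) (ψ b)

def Tmap (l : Fin 3 → ℝ) (ρ : Matrix (Fin 2) (Fin 2) ℂ) : Matrix (Fin 2) (Fin 2) ℂ :=
  (((1 + l 0 + l 1 + l 2)/4 : ℝ) : ℂ) • ρ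
    + (((1 + l 0 - l 1 - l 2)/4 : ℝ) : ℂ) • (pauli 1 * ρ * pauli 1)
    + (((1 - l 0 + l 1 - l 2)/4 : ℝ) : ℂ) • (pauli 2 * ρ * pauli 2)
    + (((1 - l 0 - l 1 + l 2)/4 : ℝ) : ℂ) • (pauli 3 * ρ * pauli 3)

lemma conj1 (ρ : Matrix (Fin 2) (Fin 2) ℂ) :
    pauli 1 * ρ * pauli 1 = !![ρ 1 1, ρ 1 0; ρ 0 1, ρ 0 0] := by
  ext i j; fin_cases i <;> fin_cases j <;>
    simp [pauli, Matrix.mul_apply, Matrix.vecMul, dotProduct, Fin.sum_univ_two]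

lemma conj2 (ρ : Matrix (Fin 2) (Fin 2) ℂ) :
    pauli 2 * ρ * pauli 2 = !![ρ 1 1, -ρ 1 0; -ρ 0 1, ρ 0 0] := by
  ext i j; fin_cases i <;> fin_cases j <;>
    simp [pauli, Matrix.mul_apply, Matrix.vecMul, dotProduct, Fin.sum_univ_two, Complex.I_mul_I] <;> ring_nf <;> simp [Complex.I_sq] <;> ring

lemma conj3 (ρ : Matrix (Fin 2) (Fin 2) ℂ) :
    pauli 3 * ρ * pauli 3 = !![ρ 0 0, -ρ 0 1; -ρ 1 0, ρ 1 1] := by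
  ext i j; fin_cases i <;> fin_cases j <;>
    simp [pauli, Matrix.mul_apply, Matrix.vecMul, dotProduct, Fin.sum_univ_two]

lemma Tmap_apply (l : Fin 3 → ℝ) (ρ : Matrix (Fin 2) (Fin 2) ℂ) :
    Tmap l ρ = !![ (((1 + l 2)/2 : ℝ) : ℂ) * ρ 0 0 + (((1 - l 2)/2 : ℝ) : ℂ) * ρ 1 1,
                   (((l 0 + l 1)/2 : ℝ) : ℂ) * ρ 0 1 + (((l 0 - l 1)/2 : ℝ) : ℂ) * ρ 1 0;
                   (((l 0 + l 1)/2 : ℝ) : ℂ) * ρ 1 0 + (((l 0 - l 1)/2 : ℝ) : ℂ) * ρ 0 1,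
                   (((1 + l 2)/2 : ℝ) : ℂ) * ρ 1 1 + (((1 - l 2)/2 : ℝ) : ℂ) * ρ 0 0 ] := by
  rw [Tmap, conj1, conj2, conj3]
  ext i j; fin_cases i <;> fin_cases j <;> simp <;> push_cast <;> ring

lemma Tmap_comp (l m : Fin 3 → ℝ) (ρ : Matrix (Fin 2) (Fin 2) ℂ) :
    Tmap l (Tmap m ρ) = Tmap (fun i => l i * m i) ρ := by
  rw [Tmap_apply m, Tmap_apply, Tmap_apply]
  ext i j; fin_cases i <;> fin_cases j <;> simp <;> push_cast <;> ring

lemma Tmap_iterate (l : Fin 3 → ℝ) (n : ℕ) (ρ : Matrix (Fin 2) (Fin 2) ℂ) :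
    (Tmap l)^[n+1] ρ = Tmap (fun i => l i ^ (n+1)) ρ := by
  induction n generalizing ρ with
  | zero =>
      rw [zero_add, Function.iterate_one]
      have h : (fun i => l i ^ 1) = l := by funext i; rw [pow_one]
      rw [h]
  | succ n ih =>
      rw [Function.iterate_succ_apply, ih, Tmap_comp]
      have h : (fun i => l i ^ (n+1) * l i) = (fun i => l i ^ (n+1+1)) := by
        funext i; ring
      rw [h]

lemma Tmap_eq_pauliCh (p : Fin 3 → ℝ) (ρ : Matrix (Fin 2) (Fin 2) ℂ) :
    Tmap ![1-(p 1+p 2)/2, 1-(p 2+p 0)/2, 1-(p 0+p 1)/2] ρ = pauliCh p ρ := by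
  have h0 : pauli 0 = 1 := rfl
  have e0 : pw p 0 = 4 - (p 0 + p 1 + p 2) := rfl
  have e1 : pw p 1 = p 0 := rfl
  have e2 : pw p 2 = p 1 := rfl
  have e3 : pw p 3 = p 2 := rfl
  have f0 : (![1-(p 1+p 2)/2, 1-(p 2+p 0)/2, 1-(p 0+p 1)/2] : Fin 3 → ℝ) 0 = 1-(p 1+p 2)/2 := rfl
  have f1 : (![1-(p 1+p 2)/2, 1-(p 2+p 0)/2, 1-(p 0+p 1)/2] : Fin 3 → ℝ) 1 = 1-(p 2+p 0)/2 := rfl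
  have f2 : (![1-(p 1+p 2)/2, 1-(p 2+p 0)/2, 1-(p 0+p 1)/2] : Fin 3 → ℝ) 2 = 1-(p 0+p 1)/2 := rfl
  simp only [pauliCh, Fin.sum_univ_four, Tmap, h0, one_mul, mul_one, e0, e1, e2, e3, f0, f1, f2]
  push_cast
  module

lemma root_pow (x : ℝ) (hx : 0 ≤ x) (L : ℕ) (hL : 1 ≤ L) :
    (x ^ (1 / (L:ℝ))) ^ L = x := by
  rw [← Real.rpow_natCast (x ^ (1/(L:ℝ))) L, ← Real.rpow_mul hx]
  rw [one_div, inv_mul_cancel₀ (Nat.cast_ne_zero.mpr (by omega)), Real.rpow_one]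

/-- a Pauli channel decomposes into the `L`-fold composition of the
channel `T_ε` with probabilities defined via real `L`-th roots. -/
theorem pauliCh_iterate_decomposition (p : Fin 3 → ℝ) (hp : ∀ i, 0 ≤ p i)
    (hpsum : p 0 + p 1 + p 2 ≤ 4)
    (h23 : 0 ≤ 1 - (p 1 + p 2) / 2) (h31 : 0 ≤ 1 - (p 2 + p 0) / 2)
    (h12 : 0 ≤ 1 - (p 0 + p 1) / 2)
    (L : ℕ) (hL : 1 ≤ L) (ε : Fin 3 → ℝ)
    (hε1 : ε 0 = (1/4) * (1 + (1 - (p 1 + p 2) / 2) ^ (1 / (L : ℝ))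
      - (1 - (p 2 + p 0) / 2) ^ (1 / (L : ℝ)) - (1 - (p 0 + p 1) / 2) ^ (1 / (L : ℝ))))
    (hε2 : ε 1 = (1/4) * (1 - (1 - (p 1 + p 2) / 2) ^ (1 / (L : ℝ))
      + (1 - (p 2 + p 0) / 2) ^ (1 / (L : ℝ)) - (1 - (p 0 + p 1) / 2) ^ (1 / (L : ℝ))))
    (hε3 : ε 2 = (1/4) * (1 - (1 - (p 1 + p 2) / 2) ^ (1 / (L : ℝ))
      - (1 - (p 2 + p 0) / 2) ^ (1 / (L : ℝ)) + (1 - (p 0 + p 1) / 2) ^ (1 / (L : ℝ))))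
    (ρ : Mat2) :
    (fun τ : Mat2 =>
        ((1 - ε 0 - ε 1 - ε 2 : ℝ) : ℂ) • τ
          + ((ε 0 : ℝ) : ℂ) • (pauli 1 * τ * pauli 1)
          + ((ε 1 : ℝ) : ℂ) • (pauli 2 * τ * pauli 2)
          + ((ε 2 : ℝ) : ℂ) • (pauli 3 * τ * pauli 3))^[L] ρ
      = pauliCh p ρ := by
  have f0 : (![(1 - (p 1 + p 2) / 2) ^ (1 / (L : ℝ)), (1 - (p 2 + p 0) / 2) ^ (1 / (L : ℝ)),
      (1 - (p 0 + p 1) / 2) ^ (1 / (L : ℝ))] : Fin 3 → ℝ) 0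
      = (1 - (p 1 + p 2) / 2) ^ (1 / (L : ℝ)) := rfl
  have f1 : (![(1 - (p 1 + p 2) / 2) ^ (1 / (L : ℝ)), (1 - (p 2 + p 0) / 2) ^ (1 / (L : ℝ)),
      (1 - (p 0 + p 1) / 2) ^ (1 / (L : ℝ))] : Fin 3 → ℝ) 1
      = (1 - (p 2 + p 0) / 2) ^ (1 / (L : ℝ)) := rfl
  have f2 : (![(1 - (p 1 + p 2) / 2) ^ (1 / (L : ℝ)), (1 - (p 2 + p 0) / 2) ^ (1 / (L : ℝ)),
      (1 - (p 0 + p 1) / 2) ^ (1 / (L : ℝ))] : Fin 3 → ℝ) 2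
      = (1 - (p 0 + p 1) / 2) ^ (1 / (L : ℝ)) := rfl
  have hfun : (fun τ : Mat2 =>
        ((1 - ε 0 - ε 1 - ε 2 : ℝ) : ℂ) • τ
          + ((ε 0 : ℝ) : ℂ) • (pauli 1 * τ * pauli 1)
          + ((ε 1 : ℝ) : ℂ) • (pauli 2 * τ * pauli 2)
          + ((ε 2 : ℝ) : ℂ) • (pauli 3 * τ * pauli 3))
      = Tmap ![(1 - (p 1 + p 2) / 2) ^ (1 / (L : ℝ)), (1 - (p 2 + p 0) / 2) ^ (1 / (L : ℝ)),
          (1 - (p 0 + p 1) / 2) ^ (1 / (L : ℝ))] := by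
    funext τ
    unfold Tmap
    rw [f0, f1, f2]
    have c0 : (1 - ε 0 - ε 1 - ε 2 : ℝ)
        = (1 + (1 - (p 1 + p 2) / 2) ^ (1 / (L : ℝ)) + (1 - (p 2 + p 0) / 2) ^ (1 / (L : ℝ))
            + (1 - (p 0 + p 1) / 2) ^ (1 / (L : ℝ))) / 4 := by
      rw [hε1, hε2, hε3]; ring
    have c1 : (ε 0 : ℝ)
        = (1 + (1 - (p 1 + p 2) / 2) ^ (1 / (L : ℝ)) - (1 - (p 2 + p 0) / 2) ^ (1 / (L : ℝ))
            - (1 - (p 0 + p 1) / 2) ^ (1 / (L : ℝ))) / 4 := by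
      rw [hε1]; ring
    have c2 : (ε 1 : ℝ)
        = (1 - (1 - (p 1 + p 2) / 2) ^ (1 / (L : ℝ)) + (1 - (p 2 + p 0) / 2) ^ (1 / (L : ℝ))
            - (1 - (p 0 + p 1) / 2) ^ (1 / (L : ℝ))) / 4 := by
      rw [hε2]; ring
    have c3 : (ε 2 : ℝ)
        = (1 - (1 - (p 1 + p 2) / 2) ^ (1 / (L : ℝ)) - (1 - (p 2 + p 0) / 2) ^ (1 / (L : ℝ))
            + (1 - (p 0 + p 1) / 2) ^ (1 / (L : ℝ))) / 4 := by
      rw [hε3]; ring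
    rw [c0, c1, c2, c3]
  rw [hfun]
  obtain ⟨n, rfl⟩ : ∃ n, L = n + 1 := ⟨L - 1, by omega⟩
  rw [Tmap_iterate]
  have hpow : (fun i => (![(1 - (p 1 + p 2) / 2) ^ (1 / ((n+1 : ℕ) : ℝ)),
        (1 - (p 2 + p 0) / 2) ^ (1 / ((n+1 : ℕ) : ℝ)),
        (1 - (p 0 + p 1) / 2) ^ (1 / ((n+1 : ℕ) : ℝ))] : Fin 3 → ℝ) i ^ (n + 1))
      = ![1 - (p 1 + p 2) / 2, 1 - (p 2 + p 0) / 2, 1 - (p 0 + p 1) / 2] := by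
    funext i
    fin_cases i
    · exact (f0 ▸ root_pow _ h23 (n+1) (by omega))
    · exact (f1 ▸ root_pow _ h31 (n+1) (by omega))
    · exact (f2 ▸ root_pow _ h12 (n+1) (by omega))
  rw [hpow, Tmap_eq_pauliCh]
end
end

section
/- Let p = (p₁,p₂,p₃) be a vector of nonnegative reals with p₁+p₂+p₃ ≤ 4, p₀ := 4 − (p₁+p₂+p₃), α₀ := p₀²+p₁²+p₂²+p₃², α₁ := 2(p₀p₁+p₂p₃), α₂ := 2(p₀p₂+p₃p₁), α₃ := 2(p₀p₃+p₁p₂), and let q^{(j)}_p and q_p be as defined below. Then for every real q_N and every 2×2 complex matrix ρ with tr(ρ) = 1: Σ_{k=0}^{3} (α_k/16)·σ_k·[(1−q_N)·I/2 + q_N·ρ]·σ_k = ((1+3q_N q_p)/4)·ρ + Σ_{j=1}^{3} ((1−q_N q^{(j)}_p)/4)·σ_j ρ σ_j. -/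
open Matrix Kronecker
open scoped ComplexOrder

noncomputable section

/-- Bell-diagonal weights `α₀, α₁, α₂, α₃` built from `p` (with `p₀ := 4 − (p₁+p₂+p₃)`). -/
def alphav (p : Fin 3 → ℝ) : Fin 4 → ℝ :=
  ![(4 - (p 0 + p 1 + p 2)) ^ 2 + p 0 ^ 2 + p 1 ^ 2 + p 2 ^ 2,
    2 * ((4 - (p 0 + p 1 + p 2)) * p 0 + p 1 * p 2),
    2 * ((4 - (p 0 + p 1 + p 2)) * p 1 + p 2 * p 0),
    2 * ((4 - (p 0 + p 1 + p 2)) * p 2 + p 0 * p 1)]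

/-- The probabilities `q⁽¹⁾_p, q⁽²⁾_p, q⁽³⁾_p` (with `Δ_{ij} := p_i − p_j`). -/
def qvec (p : Fin 3 → ℝ) : Fin 3 → ℝ :=
  ![(1 - p 0) ^ 2 - (1/4) * ((p 0 - p 1) ^ 2 - (p 1 - p 2) ^ 2 + (p 2 - p 0) ^ 2),
    (1 - p 1) ^ 2 - (1/4) * ((p 0 - p 1) ^ 2 + (p 1 - p 2) ^ 2 - (p 2 - p 0) ^ 2),
    (1 - p 2) ^ 2 - (1/4) * (-(p 0 - p 1) ^ 2 + (p 1 - p 2) ^ 2 + (p 2 - p 0) ^ 2)]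

/-- `q_p`, the average of the `q⁽ʲ⁾_p`. -/
def qavg (p : Fin 3 → ℝ) : ℝ := (qvec p 0 + qvec p 1 + qvec p 2) / 3

set_option maxHeartbeats 2000000 in
/-- the noisy PBT channel in Kraus form. -/
theorem noisyPBT_channel_form (p : Fin 3 → ℝ) (hp : ∀ i, 0 ≤ p i)
    (hpsum : p 0 + p 1 + p 2 ≤ 4) (qN : ℝ) (ρ : Mat2) (hρ : ρ.trace = 1) :
    ∑ k : Fin 4, ((alphav p k / 16 : ℝ) : ℂ) •
        (pauli k * ((((1 - qN) / 2 : ℝ) : ℂ) • (1 : Mat2) + ((qN : ℝ) : ℂ) • ρ) * pauli k)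
      = (((1 + 3 * qN * qavg p) / 4 : ℝ) : ℂ) • ρ +
        ∑ j : Fin 3, (((1 - qN * qvec p j) / 4 : ℝ) : ℂ) •
          (pauli j.succ * ρ * pauli j.succ) := by
  have h11 : ρ 1 1 = 1 - ρ 0 0 := by
    have := hρ
    simp [Matrix.trace, Fin.sum_univ_two, Matrix.diag] at this
    linear_combination this
  ext i j
  fin_cases i <;> fin_cases j <;>
    simp [pauli, alphav, qvec, qavg, Fin.sum_univ_four, Fin.sum_univ_three,
      Matrix.mul_apply, Fin.sum_univ_two, Matrix.one_apply, Matrix.vecMul, dotProduct, h11] <;>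
    push_cast <;> ring_nf <;> simp [Complex.I_sq] <;> ring
end
end
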